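/- Let σ > 0 and T > 0. Suppose Θ: [−T, T] → ℝ is twice continuously differentiable with Θ ≥ 0, F: [−T, T] → ℝ is continuous with F ≥ 0, and Θ''(t) ≥ σ²Θ(t) − F(t) for all t ∈ [−T, T]. Then ∫_{−T}^{T} Θ(t) dt ≤ (2/σ)·(Θ(T) + Θ(−T))/(1 − e^{−4σT}) + (1/σ²)·∫_{−T}^{T} F(s) ds. -/

import Mathlib

open Real MeasureTheory Set

/-- Integrated exponential decay estimate for nonnegative subsolutions of
`Θ'' ≥ σ²Θ − F` on `[−T, T]` (Corollary 4.10). -/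
theorem integrated_exp_decay_subsolution (σ T : ℝ) (hσ : 0 < σ) (hT : 0 < T)
    (Θ F : ℝ → ℝ)
    (hΘ : ContDiff ℝ 2 Θ) (hF : Continuous F)
    (hΘpos : ∀ t ∈ Icc (-T) T, 0 ≤ Θ t)
    (hFpos : ∀ t ∈ Icc (-T) T, 0 ≤ F t)
    (hsub : ∀ t ∈ Icc (-T) T, σ ^ 2 * Θ t - F t ≤ deriv (deriv Θ) t) :
    (∫ t in (-T)..T, Θ t) ≤
      (2 / σ) * (Θ T + Θ (-T)) / (1 - Real.exp (-4 * σ * T))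
        + (1 / σ ^ 2) * ∫ s in (-T)..T, F s := by
  have hT' : (-T) ≤ T := by linarith
  set c := Real.cosh (σ * T) with hc
  have hcpos : 0 < c := Real.cosh_pos (σ * T)
  have hσ2 : (0:ℝ) < σ ^ 2 := by positivity
  -- regularity of Θ
  have hΘ11 : ContDiff ℝ (1 + 1) Θ := by norm_num; exact hΘ
  have hΘ1 : ContDiff ℝ 1 (deriv Θ) := (contDiff_succ_iff_deriv.mp hΘ11).2.2
  have hΘdiff : Differentiable ℝ Θ := (contDiff_succ_iff_deriv.mp hΘ11).1
  have hd1cont : Continuous (deriv Θ) := hΘ1.continuous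
  have hd2cont : Continuous (deriv (deriv Θ)) := hΘ1.continuous_deriv le_rfl
  have hΘcont : Continuous Θ := hΘ.continuous
  have hΘ' : ∀ t : ℝ, HasDerivAt Θ (deriv Θ t) t := fun t => (hΘdiff t).hasDerivAt
  have hΘ'' : ∀ t : ℝ, HasDerivAt (deriv Θ) (deriv (deriv Θ) t) t :=
    fun t => ((hΘ1.differentiable one_ne_zero) t).hasDerivAt
  -- the test function and its derivatives
  set w : ℝ → ℝ := fun t => (1 - Real.cosh (σ * t) / c) / σ ^ 2 with hw
  set w1 : ℝ → ℝ := fun t => -(Real.sinh (σ * t) / (c * σ)) with hw1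
  set w2 : ℝ → ℝ := fun t => -(Real.cosh (σ * t) / c) with hw2
  have hcosh : ∀ t : ℝ, HasDerivAt (fun t => Real.cosh (σ * t)) (σ * Real.sinh (σ * t)) t := by
    intro t
    have := (Real.hasDerivAt_cosh (σ * t)).comp t ((hasDerivAt_id t).const_mul σ)
    simpa [mul_comm, Function.comp_def] using this
  have hsinh : ∀ t : ℝ, HasDerivAt (fun t => Real.sinh (σ * t)) (σ * Real.cosh (σ * t)) t := by
    intro t
    have := (Real.hasDerivAt_sinh (σ * t)).comp t ((hasDerivAt_id t).const_mul σ)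
    simpa [mul_comm, Function.comp_def] using this
  have hwderiv : ∀ t : ℝ, HasDerivAt w (w1 t) t := by
    intro t
    have h := (((hcosh t).div_const c).const_sub 1).div_const (σ ^ 2)
    refine h.congr_deriv ?_
    simp only [hw1]
    field_simp
  have hw1deriv : ∀ t : ℝ, HasDerivAt w1 (w2 t) t := by
    intro t
    have h := (((hsinh t).div_const (c * σ))).neg
    refine h.congr_deriv ?_
    simp only [hw2]
    field_simp
  have hwcont : Continuous w := by
    simp only [hw]; fun_prop
  have hw1cont : Continuous w1 := by
    simp only [hw1]; fun_prop
  have hw2cont : Continuous w2 := by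
    simp only [hw2]; fun_prop
  -- values at endpoints
  have hcoshneg : Real.cosh (σ * -T) = c := by rw [hc, mul_neg, Real.cosh_neg]
  have hwT : w T = 0 := by simp only [hw]; rw [div_self (ne_of_gt hcpos)]; ring
  have hwnegT : w (-T) = 0 := by
    simp only [hw]; rw [hcoshneg, div_self (ne_of_gt hcpos)]; ring
  have hw1T : w1 T = -(Real.sinh (σ * T) / (c * σ)) := rfl
  have hw1negT : w1 (-T) = Real.sinh (σ * T) / (c * σ) := by
    simp only [hw1]; rw [mul_neg, Real.sinh_neg]; ring
  -- integrability
  have int_w_d2 : IntervalIntegrable (fun t => w t * deriv (deriv Θ) t) volume (-T) T :=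
    (hwcont.mul hd2cont).intervalIntegrable _ _
  have int_w1_d1 : IntervalIntegrable (fun t => w1 t * deriv Θ t) volume (-T) T :=
    (hw1cont.mul hd1cont).intervalIntegrable _ _
  have int_w2_Θ : IntervalIntegrable (fun t => w2 t * Θ t) volume (-T) T :=
    (hw2cont.mul hΘcont).intervalIntegrable _ _
  have int_w_Θ : IntervalIntegrable (fun t => w t * Θ t) volume (-T) T :=
    (hwcont.mul hΘcont).intervalIntegrable _ _
  have int_w_F : IntervalIntegrable (fun t => w t * F t) volume (-T) T :=
    (hwcont.mul hF).intervalIntegrable _ _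
  have int_Θ : IntervalIntegrable Θ volume (-T) T := hΘcont.intervalIntegrable _ _
  have int_F : IntervalIntegrable F volume (-T) T := hF.intervalIntegrable _ _
  have int_w1' : IntervalIntegrable w1 volume (-T) T := hw1cont.intervalIntegrable _ _
  have int_w2' : IntervalIntegrable w2 volume (-T) T := hw2cont.intervalIntegrable _ _
  have int_d2 : IntervalIntegrable (deriv (deriv Θ)) volume (-T) T :=
    hd2cont.intervalIntegrable _ _
  have int_d1 : IntervalIntegrable (deriv Θ) volume (-T) T := hd1cont.intervalIntegrable _ _
  -- integration by parts, twice
  have parts1 : (∫ t in (-T)..T, w t * deriv (deriv Θ) t)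
      = w T * deriv Θ T - w (-T) * deriv Θ (-T) - ∫ t in (-T)..T, w1 t * deriv Θ t := by
    exact intervalIntegral.integral_mul_deriv_eq_deriv_mul
      (fun x _ => hwderiv x) (fun x _ => hΘ'' x) int_w1' int_d2
  have parts2 : (∫ t in (-T)..T, w1 t * deriv Θ t)
      = w1 T * Θ T - w1 (-T) * Θ (-T) - ∫ t in (-T)..T, w2 t * Θ t := by
    exact intervalIntegral.integral_mul_deriv_eq_deriv_mul
      (fun x _ => hw1deriv x) (fun x _ => hΘ' x) int_w2' int_d1
  -- pointwise identity w2 = σ² w - 1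
  have hw2eq : ∀ t : ℝ, w2 t = σ ^ 2 * w t - 1 := by
    intro t
    simp only [hw, hw2]
    field_simp
    ring
  have int_w2_Θ_eq : (∫ t in (-T)..T, w2 t * Θ t)
      = σ ^ 2 * (∫ t in (-T)..T, w t * Θ t) - ∫ t in (-T)..T, Θ t := by
    have : (fun t => w2 t * Θ t) = fun t => σ ^ 2 * (w t * Θ t) - Θ t := by
      funext t; rw [hw2eq t]; ring
    rw [this, intervalIntegral.integral_sub (int_w_Θ.const_mul _) int_Θ,
      intervalIntegral.integral_const_mul]
  -- w is nonnegative and ≤ 1/σ² on [-T, T]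
  have hwnonneg : ∀ t ∈ Icc (-T) T, 0 ≤ w t := by
    intro t ht
    have habs : |σ * t| ≤ |σ * T| := by
      rw [abs_mul, abs_mul, abs_of_pos hσ]
      have := abs_le.mpr ⟨ht.1, ht.2⟩
      have hTabs : |T| = T := abs_of_pos hT
      rw [hTabs]
      exact mul_le_mul_of_nonneg_left this hσ.le
    have hle : Real.cosh (σ * t) ≤ c := hc ▸ Real.cosh_le_cosh.mpr habs
    simp only [hw]
    apply div_nonneg _ hσ2.le
    rw [sub_nonneg, div_le_one hcpos]
    exact hle
  have hwle : ∀ t : ℝ, w t ≤ 1 / σ ^ 2 := by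
    intro t
    simp only [hw]
    have h0 : 0 ≤ Real.cosh (σ * t) / c := div_nonneg (Real.cosh_pos _).le hcpos.le
    gcongr
    linarith
  -- the key nonnegativity
  have key : 0 ≤ ∫ t in (-T)..T, w t * (deriv (deriv Θ) t - σ ^ 2 * Θ t + F t) := by
    apply intervalIntegral.integral_nonneg hT'
    intro t ht
    apply mul_nonneg (hwnonneg t ht)
    have := hsub t ht
    linarith
  have expand : (∫ t in (-T)..T, w t * (deriv (deriv Θ) t - σ ^ 2 * Θ t + F t))
      = (∫ t in (-T)..T, w t * deriv (deriv Θ) t)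
        - σ ^ 2 * (∫ t in (-T)..T, w t * Θ t) + ∫ t in (-T)..T, w t * F t := by
    have : (fun t => w t * (deriv (deriv Θ) t - σ ^ 2 * Θ t + F t))
        = fun t => (w t * deriv (deriv Θ) t - σ ^ 2 * (w t * Θ t)) + w t * F t := by
      funext t; ring
    rw [this, intervalIntegral.integral_add (int_w_d2.sub (int_w_Θ.const_mul _)) int_w_F,
      intervalIntegral.integral_sub int_w_d2 (int_w_Θ.const_mul _),
      intervalIntegral.integral_const_mul]
  -- put everything together
  set k : ℝ := Real.sinh (σ * T) / (c * σ) with hk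
  have main : (∫ t in (-T)..T, Θ t) ≤ k * (Θ T + Θ (-T)) + ∫ t in (-T)..T, w t * F t := by
    rw [expand, parts1, parts2, int_w2_Θ_eq, hwT, hwnegT, hw1T, hw1negT] at key
    linarith
  -- bound the F-term
  have hFbound : (∫ t in (-T)..T, w t * F t) ≤ (1 / σ ^ 2) * ∫ s in (-T)..T, F s := by
    rw [← intervalIntegral.integral_const_mul]
    apply intervalIntegral.integral_mono_on hT' int_w_F (int_F.const_mul _)
    intro t ht
    exact mul_le_mul_of_nonneg_right (hwle t) (hFpos t ht)
  -- bound the boundary term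
  have hSnonneg : 0 ≤ Θ T + Θ (-T) := by
    have h1 := hΘpos T ⟨hT', le_refl T⟩
    have h2 := hΘpos (-T) ⟨le_refl (-T), hT'⟩
    linarith
  have hkle : k ≤ 1 / σ := by
    rw [hk, div_le_div_iff₀ (by positivity) hσ]
    have h := Real.cosh_sub_sinh (σ * T)
    have hexp : 0 < Real.exp (-(σ * T)) := Real.exp_pos _
    nlinarith
  have hexplt : Real.exp (-4 * σ * T) < 1 := by
    rw [Real.exp_lt_one_iff]; nlinarith
  have hexppos : 0 < Real.exp (-4 * σ * T) := Real.exp_pos _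
  have hbd : k * (Θ T + Θ (-T)) ≤ (2 / σ) * (Θ T + Θ (-T)) / (1 - Real.exp (-4 * σ * T)) := by
    have h1 : (1:ℝ) / σ ≤ (2 / σ) / (1 - Real.exp (-4 * σ * T)) := by
      rw [div_le_div_iff₀ hσ (by linarith)]
      have h2 : (2 / σ) * σ = 2 := div_mul_cancel₀ 2 (ne_of_gt hσ)
      nlinarith
    calc k * (Θ T + Θ (-T)) ≤ (1 / σ) * (Θ T + Θ (-T)) :=
          mul_le_mul_of_nonneg_right hkle hSnonneg
      _ ≤ ((2 / σ) / (1 - Real.exp (-4 * σ * T))) * (Θ T + Θ (-T)) :=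
          mul_le_mul_of_nonneg_right h1 hSnonneg
      _ = (2 / σ) * (Θ T + Θ (-T)) / (1 - Real.exp (-4 * σ * T)) := by ring
  linarith
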